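/- Let U_1, …, U_r ∈ ℕ and suppose u_i(e) ≤ U_i for all e ∈ A × B and 1 ≤ i ≤ r. Define the mixed-radix weight function w_mixed(e) = ∑_{i=1}^{r} u_i(e) · ∏_{j=i+1}^{r} (2U_j + 1). Then for all a, a' ∈ A and b, b' ∈ B: if p({(a, b)}) > p({(a, b'), (a', b)}) in the lexicographic order, then w_mixed((a, b)) > w_mixed((a, b')) + w_mixed((a', b)). -/

import Mathlib

/-- Telescoping identity for mixed-radix digits. -/
lemma mixed_radix_aux {ι : Type*} [LinearOrder ι] (c : ι → ℕ) (s : Finset ι) :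
    ∑ j ∈ s, c j * ∏ k ∈ s.filter (j < ·), (c k + 1) + 1 = ∏ j ∈ s, (c j + 1) := by
  induction s using Finset.induction_on_min with
  | empty => simp
  | insert a s ha ih =>
    have hna : a ∉ s := fun h => lt_irrefl a (ha a h)
    rw [Finset.sum_insert hna, Finset.prod_insert hna]
    have h1 : (insert a s).filter (a < ·) = s := by
      ext x
      simp only [Finset.mem_filter, Finset.mem_insert]
      constructor
      · rintro ⟨h | h, hlt⟩
        · exact absurd hlt (by simp [h])
        · exact h
      · exact fun h => ⟨Or.inr h, ha x h⟩
    have h2 : ∀ j ∈ s, (insert a s).filter (j < ·) = s.filter (j < ·) := by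
      intro j hj
      ext x
      simp only [Finset.mem_filter, Finset.mem_insert]
      constructor
      · rintro ⟨h | h, hlt⟩
        · exact absurd (h ▸ hlt) (not_lt.2 (ha j hj).le)
        · exact ⟨h, hlt⟩
      · exact fun ⟨h, hlt⟩ => ⟨Or.inr h, hlt⟩
    rw [h1, Finset.sum_congr rfl (fun j hj => by rw [h2 j hj]), add_mul, one_mul, ← ih]
    ring

/-- the mixed-radix weight function with bases `2 * U i + 1`
satisfies the improving-pair weight condition. -/
theorem mixed_radix_weight_condition {A B : Type*}
    (r : ℕ) (u : Fin r → A × B → ℕ) (U : Fin r → ℕ)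
    (hU : ∀ (i : Fin r) (e : A × B), u i e ≤ U i)
    (w : A × B → ℕ)
    (hw : ∀ e : A × B, w e = ∑ i, u i e * ∏ j ∈ Finset.Ioi i, (2 * U j + 1)) :
    ∀ (a a' : A) (b b' : B),
      toLex (fun i => u i (a, b') + u i (a', b)) < toLex (fun i => u i (a, b)) →
      w (a, b') + w (a', b) < w (a, b) := by
  intro a a' b b' h
  obtain ⟨i, hj, hi⟩ := h
  set P : Fin r → ℕ := fun i => ∏ j ∈ Finset.Ioi i, (2 * U j + 1) with hP
  set v : Fin r → ℕ := fun i => u i (a, b') + u i (a', b) with hv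
  set t : Fin r → ℕ := fun i => u i (a, b) with ht
  have hsplit : ∀ f : Fin r → ℕ,
      ∑ j, f j = ∑ j ∈ Finset.Iio i, f j + f i + ∑ j ∈ Finset.Ioi i, f j := by
    intro f
    have h1 : insert i (Finset.Iio i) = Finset.Iic i := Finset.Iio_insert i
    have h2 : Finset.Iic i ∪ Finset.Ioi i = Finset.univ := by
      ext x; simp [le_or_gt]
    have hd : Disjoint (Finset.Iic i) (Finset.Ioi i) := by
      rw [Finset.disjoint_left]
      intro x hx hx'
      exact absurd (Finset.mem_Ioi.mp hx') (not_lt.2 (Finset.mem_Iic.mp hx))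
    rw [← h2, Finset.sum_union hd, ← h1, Finset.sum_insert (by simp)]
    ring
  have hw3 : w (a, b') + w (a', b) = ∑ j, v j * P j := by
    rw [hw, hw, ← Finset.sum_add_distrib]
    exact Finset.sum_congr rfl fun j _ => by rw [hv]; ring
  have hwt : w (a, b) = ∑ j, t j * P j := hw _
  rw [hw3, hwt, hsplit (fun j => v j * P j), hsplit (fun j => t j * P j)]
  have hIio : ∑ j ∈ Finset.Iio i, v j * P j = ∑ j ∈ Finset.Iio i, t j * P j :=
    Finset.sum_congr rfl fun j hjm => by
      exact congrArg (· * P j) (hj j (Finset.mem_Iio.mp hjm))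
  -- the tail bound
  have htail : ∑ j ∈ Finset.Ioi i, v j * P j + 1 ≤ P i := by
    have key := mixed_radix_aux (fun j => 2 * U j) (Finset.Ioi i)
    have hfilter : ∀ j ∈ Finset.Ioi i, (Finset.Ioi i).filter (j < ·) = Finset.Ioi j := by
      intro j hji
      ext x
      simp only [Finset.mem_filter, Finset.mem_Ioi] at *
      exact ⟨fun ⟨_, h2⟩ => h2, fun h => ⟨hji.trans h, h⟩⟩
    rw [Finset.sum_congr rfl (fun j hj => by rw [hfilter j hj])] at key
    calc ∑ j ∈ Finset.Ioi i, v j * P j + 1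
        ≤ ∑ j ∈ Finset.Ioi i, 2 * U j * P j + 1 := by
          gcongr with j _
          have := hU j (a, b'); have := hU j (a', b)
          simp only [hv]; omega
      _ = P i := key
  have hPpos : 1 ≤ P i := by
    apply Finset.one_le_prod'
    intro j _; omega
  have hvi : v i + 1 ≤ t i := hi
  have hmid : v i * P i + (∑ j ∈ Finset.Ioi i, v j * P j) + 1 ≤ t i * P i := by
    calc v i * P i + (∑ j ∈ Finset.Ioi i, v j * P j) + 1
        ≤ v i * P i + P i := by omega
      _ = (v i + 1) * P i := by ring
      _ ≤ t i * P i := Nat.mul_le_mul_right _ hvi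
  rw [hIio]
  omega
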